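/- Let n be a positive integer and let f : (ℝ_{>0})^n → (ℝ_{>0})^n be a homogeneous, monotone function whose recession function f̂ exists (i.e. for every x ∈ (ℝ_{>0})^n the limit f̂(x) = lim_{k→∞} f(x_1^k,…,x_n^k)^{1/k} exists, the k-th root taken componentwise). Suppose the only eigenvectors of f̂ in (ℝ_{>0})^n are the positive scalar multiples of the all-ones vector (i.e. f̂(x) = λx with λ > 0 implies x = c·(1,…,1) for some c > 0). Then for all λ, μ > 0 the slice space S^λ_μ(f) is bounded in the Hilbert projective metric (i.e. has finite d_H-diameter). -/

import Mathlib

open Filter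

/-- Hilbert's projective metric on the positive cone:
`d_H(y,z) = max_i log(y_i/z_i) - min_i log(y_i/z_i)`. -/
noncomputable def dH {n : ℕ} (y z : Fin n → ℝ) : ℝ :=
  (⨆ i, Real.log (y i / z i)) - (⨅ i, Real.log (y i / z i))

lemma aux_exists_max {n : ℕ} [Nonempty (Fin n)] (g : Fin n → ℝ) :
    ∃ i, (∀ j, g j ≤ g i) ∧ (⨆ j, g j) = g i := by
  obtain ⟨i, hi⟩ := Finite.exists_max g
  exact ⟨i, hi, le_antisymm (ciSup_le hi) (le_ciSup (Set.Finite.bddAbove (Set.finite_range g)) i)⟩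

lemma aux_exists_min {n : ℕ} [Nonempty (Fin n)] (g : Fin n → ℝ) :
    ∃ i, (∀ j, g i ≤ g j) ∧ (⨅ j, g j) = g i := by
  obtain ⟨i, hi⟩ := Finite.exists_min g
  exact ⟨i, hi, le_antisymm (ciInf_le (Set.Finite.bddBelow (Set.finite_range g)) i) (le_ciInf hi)⟩

lemma aux_nonexp {n : ℕ} (f : (Fin n → ℝ) → (Fin n → ℝ))
    (hmaps : ∀ x : Fin n → ℝ, (∀ i, 0 < x i) → ∀ i, 0 < f x i)
    (hhom : ∀ c : ℝ, 0 < c → ∀ x : Fin n → ℝ, (∀ i, 0 < x i) → f (c • x) = c • f x)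
    (hmono : ∀ x y : Fin n → ℝ, (∀ i, 0 < x i) → (∀ i, 0 < y i) → x ≤ y → f x ≤ f y)
    {δ : ℝ} :
    ∀ w z : Fin n → ℝ, (∀ i, 0 < w i) → (∀ i, 0 < z i) →
    (∀ i, |Real.log (w i) - Real.log (z i)| ≤ δ) →
    ∀ i, |Real.log (f w i) - Real.log (f z i)| ≤ δ := by
  have key : ∀ w z : Fin n → ℝ, (∀ i, 0 < w i) → (∀ i, 0 < z i) →
      (∀ i, Real.log (w i) - Real.log (z i) ≤ δ) →
      ∀ i, Real.log (f w i) - Real.log (f z i) ≤ δ := by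
    intro w z hw hz h i
    have hle : w ≤ Real.exp δ • z := by
      intro j
      have : Real.log (w j) ≤ δ + Real.log (z j) := by linarith [h j]
      calc w j = Real.exp (Real.log (w j)) := (Real.exp_log (hw j)).symm
        _ ≤ Real.exp (δ + Real.log (z j)) := Real.exp_le_exp.mpr this
        _ = Real.exp δ * z j := by rw [Real.exp_add, Real.exp_log (hz j)]
    have hpos : ∀ j, 0 < (Real.exp δ • z) j := fun j => by
      simpa using mul_pos (Real.exp_pos δ) (hz j)
    have := hmono w _ hw hpos hle
    rw [hhom _ (Real.exp_pos δ) z hz] at this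
    have h2 : f w i ≤ Real.exp δ * f z i := by simpa using this i
    have h3 : Real.log (f w i) ≤ Real.log (Real.exp δ * f z i) :=
      Real.log_le_log (hmaps w hw i) h2
    rw [Real.log_mul (Real.exp_ne_zero δ) (ne_of_gt (hmaps z hz i)), Real.log_exp] at h3
    linarith
  intro w z hw hz h i
  rw [abs_sub_le_iff]
  exact ⟨key w z hw hz (fun j => (abs_sub_le_iff.mp (h j)).1) i,
    key z w hz hw (fun j => (abs_sub_le_iff.mp (h j)).2) i⟩

theorem slice_spaces_bounded_of_recession_rigid
    (n : ℕ) (hn : 0 < n) (f fhat : (Fin n → ℝ) → (Fin n → ℝ))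
    (hmaps : ∀ x : Fin n → ℝ, (∀ i, 0 < x i) → ∀ i, 0 < f x i)
    (hhom : ∀ c : ℝ, 0 < c → ∀ x : Fin n → ℝ, (∀ i, 0 < x i) → f (c • x) = c • f x)
    (hmono : ∀ x y : Fin n → ℝ, (∀ i, 0 < x i) → (∀ i, 0 < y i) → x ≤ y → f x ≤ f y)
    -- the recession function exists: `f̂(x) = lim_{k→∞} f(x₁^k, …, xₙ^k)^{1/k}`
    (hrec : ∀ x : Fin n → ℝ, (∀ i, 0 < x i) → ∀ i : Fin n,
      Tendsto (fun k : ℕ => (f (fun j => x j ^ k) i) ^ ((k : ℝ)⁻¹)) atTop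
        (nhds (fhat x i)))
    -- the only eigenvectors of `f̂` in the positive cone are the
    -- positive multiples of the all-ones vector
    (huniq : ∀ x : Fin n → ℝ, (∀ i, 0 < x i) → ∀ lam : ℝ, 0 < lam →
      fhat x = lam • x → ∃ c : ℝ, 0 < c ∧ x = fun _ => c) :
    ∀ lam mu : ℝ, 0 < lam → 0 < mu → ∃ M : ℝ,
      ∀ x y : Fin n → ℝ,
        (∀ i, 0 < x i) → mu • x ≤ f x → f x ≤ lam • x →
        (∀ i, 0 < y i) → mu • y ≤ f y → f y ≤ lam • y →
        dH x y ≤ M := by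
  intro lam mu hlam hmu
  haveI : Nonempty (Fin n) := Fin.pos_iff_nonempty.mp hn
  -- Reduce to bounding the "gap" of each slice point
  suffices h : ∃ M0 : ℝ, ∀ x : Fin n → ℝ, (∀ i, 0 < x i) → mu • x ≤ f x → f x ≤ lam • x →
      (⨆ i, Real.log (x i)) - (⨅ i, Real.log (x i)) ≤ M0 by
    obtain ⟨M0, hM0⟩ := h
    refine ⟨2 * M0, fun x y hx h1 h2 hy h3 h4 => ?_⟩
    have hgx := hM0 x hx h1 h2
    have hgy := hM0 y hy h3 h4
    have hlog : ∀ i, Real.log (x i / y i) = Real.log (x i) - Real.log (y i) := fun i =>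
      Real.log_div (ne_of_gt (hx i)) (ne_of_gt (hy i))
    have bAx : BddAbove (Set.range fun i => Real.log (x i)) :=
      Set.Finite.bddAbove (Set.finite_range _)
    have bAy : BddAbove (Set.range fun i => Real.log (y i)) :=
      Set.Finite.bddAbove (Set.finite_range _)
    have bBx : BddBelow (Set.range fun i => Real.log (x i)) :=
      Set.Finite.bddBelow (Set.finite_range _)
    have bBy : BddBelow (Set.range fun i => Real.log (y i)) :=
      Set.Finite.bddBelow (Set.finite_range _)
    have hsup : (⨆ i, Real.log (x i / y i)) ≤
        (⨆ i, Real.log (x i)) - (⨅ i, Real.log (y i)) := by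
      refine ciSup_le fun i => ?_
      rw [hlog i]
      exact sub_le_sub (le_ciSup bAx i) (ciInf_le bBy i)
    have hinf : (⨅ i, Real.log (x i)) - (⨆ i, Real.log (y i)) ≤
        (⨅ i, Real.log (x i / y i)) := by
      refine le_ciInf fun i => ?_
      rw [hlog i]
      exact sub_le_sub (ciInf_le bBx i) (le_ciSup bAy i)
    have : dH x y = (⨆ i, Real.log (x i / y i)) - (⨅ i, Real.log (x i / y i)) := rfl
    rw [this]
    linarith
  by_contra hcon
  push_neg at hcon
  choose X hX1 hX2 hX3 hX4 using fun m : ℕ => hcon ((m : ℝ) + 1)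
  -- normalized logarithms
  set a : ℕ → ℝ := fun m => ⨅ j, Real.log (X m j) with ha
  set u : ℕ → Fin n → ℝ := fun m i => Real.log (X m i) - a m with hu
  set t : ℕ → ℝ := fun m => ⨆ i, u m i with htdef
  have hbB : ∀ m, BddBelow (Set.range fun j => Real.log (X m j)) := fun m =>
    Set.Finite.bddBelow (Set.finite_range _)
  have hbA : ∀ m, BddAbove (Set.range fun j => Real.log (X m j)) := fun m =>
    Set.Finite.bddAbove (Set.finite_range _)
  have hbAu : ∀ m, BddAbove (Set.range (u m)) := fun m =>
    Set.Finite.bddAbove (Set.finite_range _)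
  have hu_nonneg : ∀ m i, 0 ≤ u m i := fun m i =>
    sub_nonneg.mpr (ciInf_le (hbB m) i)
  have hu_le : ∀ m i, u m i ≤ t m := fun m i => le_ciSup (hbAu m) i
  have ht_eq : ∀ m, t m = (⨆ j, Real.log (X m j)) - a m := by
    intro m
    obtain ⟨i1, hmax, hsup⟩ := aux_exists_max (fun j => Real.log (X m j))
    refine le_antisymm (ciSup_le fun i => sub_le_sub_right (le_ciSup (hbA m) i) _) ?_
    rw [hsup]
    exact hu_le m i1
  have ht_gt : ∀ m : ℕ, (m : ℝ) + 1 < t m := fun m => by rw [ht_eq m]; exact hX4 m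
  have ht_pos : ∀ m : ℕ, 0 < t m := fun m => lt_of_le_of_lt (by positivity) (ht_gt m)
  -- normalized slice points
  set Z : ℕ → Fin n → ℝ := fun m i => Real.exp (u m i) with hZ
  have hZpos : ∀ m i, 0 < Z m i := fun m i => Real.exp_pos _
  have hZeq : ∀ m, Z m = Real.exp (-(a m)) • X m := by
    intro m
    funext i
    show Real.exp (Real.log (X m i) - a m) = Real.exp (-(a m)) * X m i
    rw [Real.exp_sub, Real.exp_log (hX1 m i), Real.exp_neg, div_eq_inv_mul]
  have hZslice : ∀ m, mu • Z m ≤ f (Z m) ∧ f (Z m) ≤ lam • Z m := by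
    intro m
    rw [hZeq m, hhom _ (Real.exp_pos _) (X m) (hX1 m)]
    constructor
    · intro i
      have h1 := hX2 m i
      simp only [Pi.smul_apply, smul_eq_mul] at h1 ⊢
      nlinarith [Real.exp_pos (-(a m))]
    · intro i
      have h1 := hX3 m i
      simp only [Pi.smul_apply, smul_eq_mul] at h1 ⊢
      nlinarith [Real.exp_pos (-(a m))]
  have hlogZ : ∀ m i, Real.log (Z m i) = u m i := fun m i => Real.log_exp _
  -- normalized direction vectors and compactness
  set v : ℕ → Fin n → ℝ := fun m i => u m i / t m with hv
  have hv01 : ∀ m, v m ∈ Set.Icc (0 : Fin n → ℝ) 1 := by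
    intro m
    constructor
    · intro i
      exact div_nonneg (hu_nonneg m i) (ht_pos m).le
    · intro i
      show u m i / t m ≤ 1
      rw [div_le_one (ht_pos m)]
      exact hu_le m i
  obtain ⟨V, hVmem, φ, hφ, hconv⟩ := (isCompact_Icc (a := (0 : Fin n → ℝ))
    (b := 1)).tendsto_subseq hv01
  have hV0 : ∀ i, 0 ≤ V i := fun i => hVmem.1 i
  have hV1 : ∀ i, V i ≤ 1 := fun i => hVmem.2 i
  set y : Fin n → ℝ := fun i => Real.exp (V i) with hy
  have hy_pos : ∀ i, 0 < y i := fun i => Real.exp_pos _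
  have hy_ge1 : ∀ i, 1 ≤ y i := fun i => Real.one_le_exp (hV0 i)
  -- sup-distance to the limit
  set ε : ℕ → ℝ := fun m => ⨆ i, |v (φ m) i - V i| with hε
  have hεbd : ∀ m i, |v (φ m) i - V i| ≤ ε m := fun m i =>
    le_ciSup (f := fun i => |v (φ m) i - V i|) (Set.Finite.bddAbove (Set.finite_range _)) i
  have hε_nonneg : ∀ m, 0 ≤ ε m := fun m =>
    le_trans (abs_nonneg _) (hεbd m (Classical.arbitrary _))
  have hε0 : Tendsto ε atTop (nhds 0) := by
    rw [NormedAddCommGroup.tendsto_nhds_zero]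
    intro η hη
    have hev : ∀ᶠ m in atTop, ∀ i, |v (φ m) i - V i| < η / 2 := by
      rw [eventually_all]
      intro i
      have hi := tendsto_pi_nhds.mp hconv i
      have := Metric.tendsto_atTop.mp hi (η / 2) (by linarith)
      obtain ⟨N, hN⟩ := this
      refine eventually_atTop.mpr ⟨N, fun m hm => ?_⟩
      have := hN m hm
      rwa [Real.dist_eq] at this
    filter_upwards [hev] with m hm
    rw [Real.norm_eq_abs, abs_of_nonneg (hε_nonneg m)]
    have : ε m ≤ η / 2 := ciSup_le fun i => (hm i).le
    linarith
  -- t along the subsequence tends to infinity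
  have ht'_top : Tendsto (fun m => t (φ m)) atTop atTop := by
    refine tendsto_atTop_mono (fun m => ?_)
      (tendsto_atTop_add_const_right atTop 1 tendsto_natCast_atTop_atTop)
    have h1 : (m : ℝ) + 1 ≤ (φ m : ℝ) + 1 := by
      have := hφ.le_apply (x := m)
      exact add_le_add_left (Nat.cast_le.mpr this) 1
    exact le_trans h1 (ht_gt (φ m)).le
  set k : ℕ → ℕ := fun m => ⌈t (φ m)⌉₊ with hk
  have hkt : ∀ m, t (φ m) ≤ (k m : ℝ) := fun m => Nat.le_ceil _
  have hkt1 : ∀ m, (k m : ℝ) ≤ t (φ m) + 1 := fun m =>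
    (Nat.ceil_lt_add_one (ht_pos (φ m)).le).le
  have hk_pos : ∀ m, (0 : ℝ) < (k m : ℝ) := fun m => lt_of_lt_of_le (ht_pos (φ m)) (hkt m)
  have hk_top : Tendsto k atTop atTop :=
    tendsto_natCast_atTop_iff.mp (tendsto_atTop_mono hkt ht'_top)
  -- the powers of y
  set Y : ℕ → Fin n → ℝ := fun K j => y j ^ K with hY
  have hYpos : ∀ K i, 0 < Y K i := fun K i => pow_pos (hy_pos i) K
  -- comparison between Z (φ m) and Y (k m)
  have hcomp : ∀ m i, |Real.log (f (Z (φ m)) i) - Real.log (f (Y (k m)) i)| ≤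
      t (φ m) * ε m + 1 := by
    intro m
    refine aux_nonexp f hmaps hhom hmono _ _ (hZpos (φ m)) (hYpos (k m)) ?_
    intro i
    rw [hlogZ (φ m) i]
    have hlogY : Real.log (Y (k m) i) = (k m : ℝ) * V i := by
      show Real.log (y i ^ k m) = _
      rw [Real.log_pow, hy]
      simp [Real.log_exp]
    rw [hlogY]
    set T := t (φ m)
    set K := (k m : ℝ)
    set p := v (φ m) i
    set q := V i
    have hup : u (φ m) i = T * p := by
      show u (φ m) i = T * (u (φ m) i / T)
      rw [mul_comm]
      exact (div_mul_cancel₀ _ (ne_of_gt (ht_pos (φ m)))).symm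
    rw [hup]
    have h1 : T * p - K * q = T * (p - q) + (T - K) * q := by ring
    rw [h1]
    have h2 : |T * (p - q) + (T - K) * q| ≤ |T * (p - q)| + |(T - K) * q| := abs_add_le _ _
    have h3 : |T * (p - q)| = T * |p - q| := by
      rw [abs_mul, abs_of_pos (ht_pos (φ m))]
    have h4 : |(T - K) * q| ≤ 1 := by
      rw [abs_mul]
      have h5 : |T - K| ≤ 1 := by
        rw [abs_le]
        constructor <;> [linarith [hkt1 m]; linarith [hkt m]]
      have h6 : |q| ≤ 1 := by rw [abs_le]; constructor <;> [linarith [hV0 i]; exact hV1 i]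
      nlinarith [abs_nonneg (T - K), abs_nonneg q]
    have h7 : T * |p - q| ≤ T * ε m :=
      mul_le_mul_of_nonneg_left (hεbd m i) (ht_pos (φ m)).le
    calc |T * (p - q) + (T - K) * q| ≤ |T * (p - q)| + |(T - K) * q| := h2
      _ ≤ T * ε m + 1 := by rw [h3]; linarith
  -- key limit: log (fhat y i) = V i for each i
  have hfhat1 : ∀ i, 1 ≤ fhat y i := by
    intro i
    have hone : ∀ j, (0 : ℝ) < (fun _ : Fin n => (1:ℝ)) j := fun j => one_pos
    have hc_pos := hmaps _ hone i
    have h_lb : ∀ K : ℕ, (f (fun _ => (1:ℝ)) i) ^ ((K : ℝ)⁻¹) ≤ (f (Y K) i) ^ ((K : ℝ)⁻¹) := by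
      intro K
      refine Real.rpow_le_rpow hc_pos.le ?_ (by positivity)
      have : (fun _ : Fin n => (1:ℝ)) ≤ Y K := fun j => one_le_pow₀ (hy_ge1 j)
      exact hmono _ _ hone (hYpos K) this i
    have h_c1 : Tendsto (fun K : ℕ => (f (fun _ => (1:ℝ)) i) ^ ((K : ℝ)⁻¹)) atTop (nhds 1) := by
      have h0 : Tendsto (fun K : ℕ => Real.log (f (fun _ => (1:ℝ)) i) * ((K : ℝ)⁻¹))
          atTop (nhds 0) := by
        have := tendsto_inv_atTop_zero.comp (tendsto_natCast_atTop_atTop (R := ℝ))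
        simpa using tendsto_const_nhds.mul this
      have := (Real.continuous_exp.tendsto 0).comp h0
      rw [Real.exp_zero] at this
      refine this.congr fun K => ?_
      exact (Real.rpow_def_of_pos hc_pos _).symm
    have := hrec y hy_pos i
    exact le_of_tendsto_of_tendsto' h_c1 this h_lb
  have hfhat_pos : ∀ i, 0 < fhat y i := fun i => lt_of_lt_of_le one_pos (hfhat1 i)
  have hfix : ∀ i, Real.log (fhat y i) = V i := by
    intro i
    -- limit of log f(Z)/t
    have hL : Tendsto (fun m => Real.log (f (Z (φ m)) i) / t (φ m)) atTop (nhds (V i)) := by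
      set C := max |Real.log mu| |Real.log lam| with hC
      have hbnd : ∀ m, |Real.log (f (Z m) i) - u m i| ≤ C := by
        intro m
        have h1 := (hZslice m).1 i
        have h2 := (hZslice m).2 i
        simp only [Pi.smul_apply, smul_eq_mul] at h1 h2
        have hfz := hmaps (Z m) (hZpos m) i
        have hl1 : Real.log (mu * Z m i) ≤ Real.log (f (Z m) i) :=
          Real.log_le_log (by positivity) h1
        have hl2 : Real.log (f (Z m) i) ≤ Real.log (lam * Z m i) :=
          Real.log_le_log hfz h2
        rw [Real.log_mul (ne_of_gt hmu) (ne_of_gt (hZpos m i)), hlogZ m i] at hl1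
        rw [Real.log_mul (ne_of_gt hlam) (ne_of_gt (hZpos m i)), hlogZ m i] at hl2
        rw [abs_le]
        constructor
        · have := neg_abs_le (Real.log mu)
          have hC1 : |Real.log mu| ≤ C := le_max_left _ _
          linarith
        · have := le_abs_self (Real.log lam)
          have hC2 : |Real.log lam| ≤ C := le_max_right _ _
          linarith
      have hr : Tendsto (fun m => Real.log (f (Z (φ m)) i) / t (φ m) - v (φ m) i)
          atTop (nhds 0) := by
        refine squeeze_zero_norm (fun m => ?_) (Tendsto.div_atTop
          (tendsto_const_nhds (x := C)) ht'_top)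
        have : Real.log (f (Z (φ m)) i) / t (φ m) - v (φ m) i =
            (Real.log (f (Z (φ m)) i) - u (φ m) i) / t (φ m) := by
          rw [hv]
          exact (sub_div _ _ _).symm
        rw [Real.norm_eq_abs, this, abs_div, abs_of_pos (ht_pos (φ m))]
        exact div_le_div_of_nonneg_right (hbnd (φ m)) (ht_pos (φ m)).le
      have := hr.add (tendsto_pi_nhds.mp hconv i)
      simpa using this
    -- limit of log f(Y (k m))/t
    have hA : Tendsto (fun m => Real.log (f (Y (k m)) i) / t (φ m)) atTop (nhds (V i)) := by
      have hdiff : Tendsto (fun m => Real.log (f (Y (k m)) i) / t (φ m) -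
          Real.log (f (Z (φ m)) i) / t (φ m)) atTop (nhds 0) := by
        refine squeeze_zero_norm (a := fun m => ε m + (t (φ m))⁻¹) (fun m => ?_) ?_
        · show ‖_‖ ≤ ε m + (t (φ m))⁻¹
          rw [Real.norm_eq_abs, div_sub_div_same, abs_div, abs_of_pos (ht_pos (φ m))]
          have h1 : |Real.log (f (Y (k m)) i) - Real.log (f (Z (φ m)) i)| ≤
              t (φ m) * ε m + 1 := by
            rw [abs_sub_comm]; exact hcomp m i
          have h2 := div_le_div_of_nonneg_right h1 (ht_pos (φ m)).le
          have h3 : (t (φ m) * ε m + 1) / t (φ m) = ε m + (t (φ m))⁻¹ := by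
            rw [add_div, mul_div_cancel_left₀ _ (ne_of_gt (ht_pos (φ m))), one_div]
          rw [h3] at h2
          exact h2
        · have := hε0.add ht'_top.inv_tendsto_atTop
          simpa using this
      have := hdiff.add hL
      simpa using this
    -- convert t-denominator to k-denominator
    have hTK1 : Tendsto (fun m => t (φ m) / (k m : ℝ)) atTop (nhds 1) := by
      have hlow : Tendsto (fun m => t (φ m) / (t (φ m) + 1)) atTop (nhds 1) := by
        have h0 : Tendsto (fun m => 1 - (t (φ m) + 1)⁻¹) atTop (nhds 1) := by
          have h1 : Tendsto (fun m => (t (φ m) + 1)⁻¹) atTop (nhds 0) :=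
            (tendsto_atTop_add_const_right atTop 1 ht'_top).inv_tendsto_atTop
          simpa using tendsto_const_nhds.sub h1
        refine h0.congr fun m => ?_
        have ht1 : t (φ m) + 1 ≠ 0 := ne_of_gt (by linarith [ht_pos (φ m)])
        field_simp
        ring
      refine tendsto_of_tendsto_of_tendsto_of_le_of_le hlow tendsto_const_nhds
        (fun m => ?_) (fun m => ?_)
      · exact div_le_div_of_nonneg_left (ht_pos (φ m)).le (hk_pos m) (hkt1 m)
      · exact (div_le_one (hk_pos m)).mpr (hkt m)
    have hAk : Tendsto (fun m => Real.log (f (Y (k m)) i) / (k m : ℝ)) atTop (nhds (V i)) := by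
      have := hA.mul hTK1
      rw [mul_one] at this
      refine this.congr fun m => ?_
      rw [div_mul_div_comm, mul_comm (Real.log (f (Y (k m)) i)) (t (φ m)),
        mul_div_mul_left _ _ (ne_of_gt (ht_pos (φ m)))]
    -- limit via the recession function
    have hb : Tendsto (fun K : ℕ => Real.log (f (Y K) i) / (K : ℝ)) atTop
        (nhds (Real.log (fhat y i))) := by
      have h1 := (Real.continuousAt_log (ne_of_gt (hfhat_pos i))).tendsto.comp
        (hrec y hy_pos i)
      refine h1.congr fun K => ?_
      show Real.log ((f (Y K) i) ^ ((K : ℝ)⁻¹)) = _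
      rw [Real.log_rpow (hmaps (Y K) (hYpos K) i)]
      rw [inv_mul_eq_div]
    have hbk : Tendsto (fun m => Real.log (f (Y (k m)) i) / (k m : ℝ)) atTop
        (nhds (Real.log (fhat y i))) := hb.comp hk_top
    exact tendsto_nhds_unique hbk hAk
  -- conclude fhat y = y, hence y is constant
  have heig : fhat y = (1 : ℝ) • y := by
    funext i
    have h1 : fhat y i = Real.exp (V i) := by
      rw [← hfix i, Real.exp_log (hfhat_pos i)]
    rw [Pi.smul_apply, one_smul, h1]
  obtain ⟨c, hc, hyc⟩ := huniq y hy_pos 1 one_pos heig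
  have hVc : ∀ i, V i = Real.log c := by
    intro i
    have h1 : y i = c := congrFun hyc i
    have h2 : Real.log (y i) = V i := by rw [hy]; exact Real.log_exp _
    rw [← h2, h1]
  -- final contradiction
  obtain ⟨m, hm⟩ := (hε0.eventually_lt_const (by norm_num : (0:ℝ) < 1/3)).exists
  obtain ⟨i1, hi1max, hi1⟩ := aux_exists_max (u (φ m))
  have hvi1 : v (φ m) i1 = 1 := by
    have : u (φ m) i1 = t (φ m) := hi1.symm
    rw [hv]
    show u (φ m) i1 / t (φ m) = 1
    rw [this, div_self (ne_of_gt (ht_pos (φ m)))]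
  obtain ⟨i0, hi0min, hi0⟩ := aux_exists_min (fun j => Real.log (X (φ m) j))
  have hui0 : u (φ m) i0 = 0 := by
    show Real.log (X (φ m) i0) - a (φ m) = 0
    rw [ha]
    simp only
    rw [hi0]
    ring
  have hvi0 : v (φ m) i0 = 0 := by
    show u (φ m) i0 / t (φ m) = 0
    rw [hui0, zero_div]
  have hb1 := hεbd m i1
  have hb0 := hεbd m i0
  rw [hvi1, hVc i1] at hb1
  rw [hvi0, hVc i0] at hb0
  rw [abs_le] at hb1 hb0
  have := hb1.1
  have := hb0.2
  linarith [hb1.1, hb0.2, hm]
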